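/- For all natural numbers n and m with 0 < m < n, and for every index i with 1 ≤ i ≤ C(n,m) − 1, the consecutive code words C_{n,m}[i−1] and C_{n,m}[i] differ in exactly two bit positions (their Hamming distance is 2). -/

import Mathlib

/-- The Gray-style code `C_{n,m}`: a list of binary strings (lists of Booleans,
`true` = 1, `false` = 0).  `C_{0,0}` is the one-element list containing the empty
string, `C_{n,0} = [0^n]`, `C_{n,n} = [1^n]` for `n > 0`, and for `0 < m < n`,
`C_{n,m}` is the concatenation of the list obtained by prepending `0` to every
string of `C_{n-1,m}` with the reverse of the list obtained by prepending `1` to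
every string of `C_{n-1,m-1}`. -/
def grayCode : ℕ → ℕ → List (List Bool)
  | 0, _ => [[]]
  | n + 1, 0 => [List.replicate (n + 1) false]
  | n + 1, m + 1 =>
    if m + 1 = n + 1 then [List.replicate (n + 1) true]
    else (grayCode n (m + 1)).map (List.cons false) ++
      ((grayCode n m).map (List.cons true)).reverse


/-- The Hamming distance between two (equal-length) binary strings: the number of
positions at which they differ. -/
def listHammingDist : List Bool → List Bool → ℕ
  | a :: as, b :: bs => (if a = b then 0 else 1) + listHammingDist as bs
  | _, _ => 0

theorem listHammingDist_self : ∀ a : List Bool, listHammingDist a a = 0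
  | [] => rfl
  | _ :: a => by simp [listHammingDist, listHammingDist_self a]

theorem listHammingDist_comm : ∀ a b : List Bool, listHammingDist a b = listHammingDist b a
  | [], [] => rfl
  | [], _ :: _ => rfl
  | _ :: _, [] => rfl
  | x :: a, y :: b => by
    simp only [listHammingDist, listHammingDist_comm a b]
    cases x <;> cases y <;> simp

theorem listHammingDist_append (l a b : List Bool) :
    listHammingDist (l ++ a) (l ++ b) = listHammingDist a b := by
  induction l with
  | nil => rfl
  | cons x l ih => simp [listHammingDist, ih]

theorem grayCode_length : ∀ n m, m ≤ n → (grayCode n m).length = n.choose m := by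
  intro n
  induction n with
  | zero => intro m hm; interval_cases m; rfl
  | succ n ih =>
    intro m hm
    match m with
    | 0 => simp [grayCode]
    | m + 1 =>
      by_cases h : m + 1 = n + 1
      · simp [grayCode, h, Nat.choose_self]
      · have h1 : m + 1 ≤ n := by omega
        rw [grayCode, if_neg h]
        simp [grayCode, h, ih (m+1) h1, ih m (by omega), Nat.choose_succ_succ, Nat.add_comm]

theorem getD_map_cons (b : Bool) (l : List (List Bool)) (i : ℕ) (h : i < l.length) :
    (l.map (List.cons b)).getD i [] = b :: l.getD i [] := by
  rw [List.getD_eq_getElem _ _ (by simpa), List.getD_eq_getElem _ _ h, List.getElem_map]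

theorem getD_reverse (l : List (List Bool)) (i : ℕ) (h : i < l.length) :
    l.reverse.getD i [] = l.getD (l.length - 1 - i) [] := by
  rw [List.getD_eq_getElem _ _ (by simpa), List.getD_eq_getElem _ _ (by omega),
    List.getElem_reverse]

theorem getD_append_l (l l' : List (List Bool)) (i : ℕ) (h : i < l.length) :
    (l ++ l').getD i [] = l.getD i [] := by
  rw [List.getD_eq_getElem _ _ (by simp; omega), List.getD_eq_getElem _ _ h,
    List.getElem_append_left h]

theorem getD_append_r (l l' : List (List Bool)) (i : ℕ) (h : l.length ≤ i)
    (h2 : i < l.length + l'.length) :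
    (l ++ l').getD i [] = l'.getD (i - l.length) [] := by
  rw [List.getD_eq_getElem _ _ (by simp; omega), List.getD_eq_getElem _ _ (by omega),
    List.getElem_append_right h]

theorem grayCode_head : ∀ n m, m ≤ n →
    (grayCode n m).getD 0 [] = List.replicate (n - m) false ++ List.replicate m true := by
  intro n
  induction n with
  | zero => intro m hm; interval_cases m; rfl
  | succ n ih =>
    intro m hm
    match m with
    | 0 => simp [grayCode]
    | m + 1 =>
      by_cases h : m + 1 = n + 1
      · simp [grayCode, h]
      · have h1 : m + 1 ≤ n := by omega
        have hlen : 0 < ((grayCode n (m+1)).map (List.cons false)).length := by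
          simp [grayCode_length n (m+1) h1]; exact Nat.choose_pos h1
        rw [grayCode]
        simp only [if_neg h]
        rw [getD_append_l _ _ _ hlen, getD_map_cons _ _ _ (by simpa using hlen),
          ih (m+1) h1]
        have : n + 1 - (m + 1) = (n - (m+1)) + 1 := by omega
        rw [this, List.replicate_succ]
        rfl

theorem grayCode_last : ∀ n m, 0 < m → m ≤ n →
    (grayCode n m).getD (n.choose m - 1) [] =
      true :: (List.replicate (n - m) false ++ List.replicate (m - 1) true) := by
  intro n m hm hmn
  obtain ⟨n, rfl⟩ : ∃ k, n = k + 1 := ⟨n - 1, by omega⟩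
  obtain ⟨m, rfl⟩ : ∃ k, m = k + 1 := ⟨m - 1, by omega⟩
  by_cases h : m + 1 = n + 1
  · obtain rfl : m = n := by omega
    simp [grayCode, Nat.choose_self, List.replicate_succ]
  · have h1 : m + 1 ≤ n := by omega
    have h2 : m ≤ n := by omega
    have hA : ((grayCode n (m+1)).map (List.cons false)).length = n.choose (m+1) := by
      simp [grayCode_length n (m+1) h1]
    have hB : ((grayCode n m).map (List.cons true)).length = n.choose m := by
      simp [grayCode_length n m h2]
    have hApos : 0 < n.choose (m+1) := Nat.choose_pos h1
    have hBpos : 0 < n.choose m := Nat.choose_pos h2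
    have hc : (n+1).choose (m+1) = n.choose m + n.choose (m+1) := Nat.choose_succ_succ n m
    rw [grayCode]
    simp only [if_neg h]
    rw [getD_append_r _ _ _ (by omega) (by simp [hA, hB]; omega)]
    rw [hA]
    rw [getD_reverse _ _ (by simp [hB]; omega)]
    rw [hB]
    have : n.choose m - 1 - ((n+1).choose (m+1) - 1 - n.choose (m+1)) = 0 := by omega
    rw [this, getD_map_cons _ _ _ (by rw [grayCode_length n m h2]; omega),
      grayCode_head n m h2]
    have : n + 1 - (m + 1) = n - m := by omega
    rw [this]
    simp

/-- For all natural numbers `n` and `m` with `0 < m < n`, and for every index `i`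
with `1 ≤ i ≤ C(n,m) - 1`, the consecutive code words `C_{n,m}[i-1]` and
`C_{n,m}[i]` differ in exactly two bit positions (Hamming distance `2`). -/
theorem grayCode_consecutive_hamming (n m : ℕ) (hm : 0 < m) (hmn : m < n)
    (i : ℕ) (hi1 : 1 ≤ i) (hi2 : i ≤ n.choose m - 1) :
    listHammingDist ((grayCode n m).getD (i - 1) []) ((grayCode n m).getD i []) = 2 := by
  induction n generalizing m i with
  | zero => omega
  | succ n ih =>
    match m with
    | m + 1 =>
      have h : ¬ (m + 1 = n + 1) := by omega
      have h1 : m + 1 ≤ n := by omega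
      have h2 : m ≤ n := by omega
      set A := (grayCode n (m+1)).map (List.cons false) with hAdef
      set B := (grayCode n m).map (List.cons true) with hBdef
      have hA : A.length = n.choose (m+1) := by simp [hAdef, grayCode_length n (m+1) h1]
      have hB : B.length = n.choose m := by simp [hBdef, grayCode_length n m h2]
      have hApos : 0 < n.choose (m+1) := Nat.choose_pos h1
      have hBpos : 0 < n.choose m := Nat.choose_pos h2
      have hc : (n+1).choose (m+1) = n.choose m + n.choose (m+1) := Nat.choose_succ_succ n m
      have hgc : grayCode (n+1) (m+1) = A ++ B.reverse := by
        rw [grayCode]; simp only [if_neg h]; rfl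
      rw [hgc]
      rcases lt_trichotomy i (n.choose (m+1)) with hcase | hcase | hcase
      · -- both in A
        rw [getD_append_l _ _ _ (by omega), getD_append_l _ _ _ (by omega)]
        have hglen : (grayCode n (m+1)).length = n.choose (m+1) := grayCode_length n (m+1) h1
        rw [hAdef, getD_map_cons _ _ _ (by omega), getD_map_cons _ _ _ (by omega)]
        rw [listHammingDist, if_pos rfl, Nat.zero_add]
        have hmn' : m + 1 < n := by
          by_contra hcon
          have : m + 1 = n := by omega
          rw [this, Nat.choose_self] at hcase
          omega
        exact ih (m+1) (by omega) hmn' i hi1 (by omega)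
      · -- boundary
        have hi : i = n.choose (m+1) := hcase
        rw [getD_append_l _ _ _ (by omega),
          getD_append_r _ _ _ (by omega) (by simp [hA, hB]; omega)]
        rw [hA, hi, Nat.sub_self]
        rw [getD_reverse _ _ (by simp [hB]; omega)]
        rw [hB, hAdef, hBdef]
        have hglen : (grayCode n (m+1)).length = n.choose (m+1) := grayCode_length n (m+1) h1
        rw [getD_map_cons _ _ _ (by omega), getD_map_cons _ _ _
          (by rw [grayCode_length n m h2]; omega)]
        have e1 : (grayCode n (m+1)).getD (n.choose (m+1) - 1) [] =
            true :: (List.replicate (n - (m+1)) false ++ List.replicate m true) :=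
          grayCode_last n (m+1) (by omega) h1
        rw [Nat.sub_sub, Nat.add_comm 1 0, ← Nat.sub_sub]
        simp only [Nat.sub_zero]
        rw [e1]
        rcases Nat.eq_zero_or_pos m with hm0 | hm0
        · -- m = 0 : second block last word is head = replicate n false
          subst hm0
          have e2 : (grayCode n 0).getD (n.choose 0 - 1) [] = List.replicate n false := by
            simp [Nat.choose_zero_right]
            have := grayCode_head n 0 (by omega)
            simpa using this
          rw [e2]
          have hn1 : 1 ≤ n := h1
          have : List.replicate n false = false :: List.replicate (n-1) false := by
            cases n with
            | zero => omega
            | succ k => simp [List.replicate_succ]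
          rw [this]
          simp only [listHammingDist, List.append_nil]
          have : n - 1 = n - 1 - 0 := rfl
          have heq : listHammingDist (List.replicate (n - 1) false)
              (List.replicate (n - 1) false) = 0 := listHammingDist_self _
          simp [heq]
        · -- 0 < m
          have e2 : (grayCode n m).getD (n.choose m - 1) [] =
              true :: (List.replicate (n - m) false ++ List.replicate (m - 1) true) :=
            grayCode_last n m hm0 h2
          rw [e2]
          simp only [listHammingDist]
          have hsplit : List.replicate (n - m) false =
              List.replicate (n - (m+1)) false ++ [false] := by
            have : n - m = (n - (m+1)) + 1 := by omega
            rw [this, List.replicate_succ']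
          have hsplit2 : List.replicate m true = true :: List.replicate (m-1) true := by
            cases m with
            | zero => omega
            | succ k => simp [List.replicate_succ]
          rw [hsplit, hsplit2, List.append_assoc]
          rw [listHammingDist_append]
          simp [listHammingDist, listHammingDist_self]
      · -- both in B.reverse
        rw [getD_append_r _ _ _ (by omega) (by simp [hA, hB]; omega),
          getD_append_r _ _ _ (by omega) (by simp [hA, hB]; omega)]
        rw [hA]
        have hilt : i < n.choose m + n.choose (m+1) := by omega
        rw [getD_reverse _ _ (by simp [hB]; omega), getD_reverse _ _ (by simp [hB]; omega)]
        rw [hB, hBdef]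
        have hglen : (grayCode n m).length = n.choose m := grayCode_length n m h2
        set j := n.choose m - 1 - (i - 1 - n.choose (m+1)) with hj
        have hj2 : n.choose m - 1 - (i - n.choose (m+1)) = j - 1 := by omega
        have hjb : 1 ≤ j := by omega
        have hjup : j ≤ n.choose m - 1 := by omega
        rw [hj2]
        rw [getD_map_cons _ _ _ (by omega), getD_map_cons _ _ _ (by omega)]
        rw [listHammingDist, if_pos rfl, Nat.zero_add]
        have hm1 : 0 < m := by
          by_contra hcon
          have hm0 : m = 0 := by omega
          subst hm0
          rw [Nat.choose_zero_right] at hc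
          omega
        have hmln : m < n := h1
        rw [listHammingDist_comm]
        exact ih m hm1 hmln j hjb hjup
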